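/- In the damped gravitational system on ℝ⁵, on the open set where p_x ≠ 0, the function H/p_x is a conserved quantity: L_{X_H}(H/p_x) = 0. -/

import Mathlib

noncomputable section

/-- `ℝ⁵` with coordinates `(x, y, p_x, p_y, s)`. -/
abbrev E5 : Type := ℝ × ℝ × ℝ × ℝ × ℝ

/-- The contact form `η = ds − p_x dx − p_y dy` at `pt` on the tangent vector `v`. -/
def η5 (pt v : E5) : ℝ := v.2.2.2.2 - pt.2.2.1 * v.1 - pt.2.2.2.1 * v.2.1

/-- `dη = dx ∧ dp_x + dy ∧ dp_y` on the tangent vectors `u`, `v`. -/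
def dη5 (u v : E5) : ℝ :=
  (u.1 * v.2.2.1 - u.2.2.1 * v.1) + (u.2.1 * v.2.2.2.1 - u.2.2.2.1 * v.2.1)

/-- The Hamiltonian `H = (p_x² + p_y²)/(2m) + m·g·y + γ·s` of a particle in a
constant gravitational field with friction. -/
def H5 (m g γ : ℝ) (pt : E5) : ℝ :=
  (pt.2.2.1 ^ 2 + pt.2.2.2.1 ^ 2) / (2 * m) + m * g * pt.2.1 + γ * pt.2.2.2.2

/-- The claimed contact Hamiltonian vector field
`X_H = (p_x/m)∂x + (p_y/m)∂y − γp_x ∂p_x − (mg + γp_y)∂p_y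
      + ((p_x²+p_y²)/(2m) − mgy − γs)∂s`. -/
def X5 (m g γ : ℝ) (pt : E5) : E5 :=
  (pt.2.2.1 / m, pt.2.2.2.1 / m, -γ * pt.2.2.1, -(m * g + γ * pt.2.2.2.1),
   (pt.2.2.1 ^ 2 + pt.2.2.2.1 ^ 2) / (2 * m) - m * g * pt.2.1 - γ * pt.2.2.2.2)

/-- on the open set where `p_x ≠ 0`, the function `H/p_x` is a
conserved quantity of the damped gravitational system: `L_{X_H}(H/p_x) = 0`. -/
theorem H_over_px_conserved (m g γ : ℝ) (hm : 0 < m) (pt : E5)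
    (hpx : pt.2.2.1 ≠ 0) :
    fderiv ℝ (fun q : E5 => H5 m g γ q / q.2.2.1) pt (X5 m g γ pt) = 0 := by
  set v : E5 := X5 m g γ pt with hv
  have hdiff : DifferentiableAt ℝ (fun q : E5 => H5 m g γ q / q.2.2.1) pt := by
    have h1 : DifferentiableAt ℝ (fun q : E5 => H5 m g γ q) pt := by unfold H5; fun_prop
    have h2 : DifferentiableAt ℝ (fun q : E5 => q.2.2.1) pt := by fun_prop
    have h3 := h2.inv hpx
    simpa [div_eq_mul_inv] using h1.fun_mul h3
  -- one-variable derivatives of the coordinates along the line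
  have hc : ∀ (a b : ℝ), HasDerivAt (fun t : ℝ => a + t * b) b 0 := by
    intro a b
    simpa using ((hasDerivAt_id (0:ℝ)).mul_const b).const_add a
  have hty := hc pt.2.1 v.2.1
  have htpx := hc pt.2.2.1 v.2.2.1
  have htpy := hc pt.2.2.2.1 v.2.2.2.1
  have hts := hc pt.2.2.2.2 v.2.2.2.2
  have hnum : HasDerivAt (fun t : ℝ =>
      ((pt.2.2.1 + t * v.2.2.1) ^ 2 + (pt.2.2.2.1 + t * v.2.2.2.1) ^ 2) / (2 * m)
        + m * g * (pt.2.1 + t * v.2.1) + γ * (pt.2.2.2.2 + t * v.2.2.2.2))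
      ((2 * (pt.2.2.1 + 0 * v.2.2.1) ^ 1 * v.2.2.1
        + 2 * (pt.2.2.2.1 + 0 * v.2.2.2.1) ^ 1 * v.2.2.2.1) / (2 * m)
        + m * g * v.2.1 + γ * v.2.2.2.2) 0 := by
    have h := (((htpx.pow 2).add (htpy.pow 2)).div_const (2 * m)).add
      ((hty.const_mul (m * g)).add (hts.const_mul γ))
    convert h using 1
    case e'_8 => funext t; simp only [Pi.add_apply, Pi.pow_apply]; ring
    case e'_9 => push_cast; ring_nf
    all_goals rfl
  have hden0 : pt.2.2.1 + 0 * v.2.2.1 ≠ 0 := by simpa using hpx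
  have hquot := hnum.div htpx hden0
  have hL0 : HasLineDerivAt ℝ (fun q : E5 => H5 m g γ q / q.2.2.1) 0 pt v := by
    unfold HasLineDerivAt
    have heq : (fun t : ℝ => (fun q : E5 => H5 m g γ q / q.2.2.1) (pt + t • v)) =
        (fun t : ℝ =>
          (((pt.2.2.1 + t * v.2.2.1) ^ 2 + (pt.2.2.2.1 + t * v.2.2.2.1) ^ 2) / (2 * m)
            + m * g * (pt.2.1 + t * v.2.1) + γ * (pt.2.2.2.2 + t * v.2.2.2.2))
          / (pt.2.2.1 + t * v.2.2.1)) := by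
      funext t
      simp [H5, Prod.fst_add, Prod.snd_add, Prod.smul_fst, Prod.smul_snd, smul_eq_mul]
    rw [heq]
    refine hquot.congr_deriv ?_
    rw [hv]
    simp only [X5]
    field_simp
    ring
  have hL := hdiff.hasFDerivAt.hasLineDerivAt v
  exact hL.unique hL0
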